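/- Case-elimination lemma: if T' ⊢ ⋀_{i∈I}(Box φᵢ → φᵢ) → [1]φ, where [1] satisfies distribution and provable Σ₁-completeness for the Σ₁-sentences Box φᵢ, then T' ⊢ [1]( (⋀_{i∈I} ¬Box φᵢ) → φ ). -/

import Mathlib

/-- An abstract propositional language with implication and falsum. -/
structure Lang (F : Type) where
  imp : F → F → F
  bot : F

namespace Lang
variable {F : Type} (L : Lang F)
def neg (φ : F) : F := L.imp φ L.bot
def top : F := L.neg L.bot
def conj (φ ψ : F) : F := L.neg (L.imp φ (L.neg ψ))
def iff (φ ψ : F) : F := L.conj (L.imp φ ψ) (L.imp ψ φ)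
end Lang

/-- Classical propositional derivability from a set of axioms `Γ`
(a Hilbert system with modus ponens). -/
inductive Deriv {F : Type} (L : Lang F) (Γ : Set F) : F → Prop
  | hyp {φ} : φ ∈ Γ → Deriv L Γ φ
  | ax1 (φ ψ) : Deriv L Γ (L.imp φ (L.imp ψ φ))
  | ax2 (φ ψ χ) : Deriv L Γ (L.imp (L.imp φ (L.imp ψ χ)) (L.imp (L.imp φ ψ) (L.imp φ χ)))
  | ax3 (φ ψ) : Deriv L Γ (L.imp (L.imp (L.neg φ) (L.neg ψ)) (L.imp ψ φ))
  | mp {φ ψ} : Deriv L Γ (L.imp φ ψ) → Deriv L Γ φ → Deriv L Γ ψ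

namespace DerivAux
variable {F : Type} {L : Lang F} {Γ Γ' : Set F} {a b c x y : F}

theorem weaken (hs : Γ ⊆ Γ') (h : Deriv L Γ a) : Deriv L Γ' a := by
  induction h with
  | hyp h => exact Deriv.hyp (hs h)
  | ax1 φ ψ => exact Deriv.ax1 φ ψ
  | ax2 φ ψ χ => exact Deriv.ax2 φ ψ χ
  | ax3 φ ψ => exact Deriv.ax3 φ ψ
  | mp _ _ ih1 ih2 => exact Deriv.mp ih1 ih2

theorem imp_id (a : F) : Deriv L Γ (L.imp a a) :=
  Deriv.mp (Deriv.mp (Deriv.ax2 a (L.imp a a) a) (Deriv.ax1 a (L.imp a a))) (Deriv.ax1 a a)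

theorem ded (h : Deriv L (insert a Γ) b) : Deriv L Γ (L.imp a b) := by
  induction h with
  | hyp h =>
    rcases h with h | h
    · subst h; exact imp_id _
    · exact Deriv.mp (Deriv.ax1 _ a) (Deriv.hyp h)
  | ax1 φ ψ => exact Deriv.mp (Deriv.ax1 _ a) (Deriv.ax1 φ ψ)
  | ax2 φ ψ χ => exact Deriv.mp (Deriv.ax1 _ a) (Deriv.ax2 φ ψ χ)
  | ax3 φ ψ => exact Deriv.mp (Deriv.ax1 _ a) (Deriv.ax3 φ ψ)
  | mp _ _ ih1 ih2 => exact Deriv.mp (Deriv.mp (Deriv.ax2 a _ _) ih1) ih2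

theorem hyp0 : Deriv L (insert a Γ) a := Deriv.hyp (Set.mem_insert _ _)

theorem wk1 (h : Deriv L Γ b) : Deriv L (insert a Γ) b :=
  weaken (Set.subset_insert _ _) h

theorem trans (h1 : Deriv L Γ (L.imp a b)) (h2 : Deriv L Γ (L.imp b c)) :
    Deriv L Γ (L.imp a c) :=
  ded (Deriv.mp (wk1 h2) (Deriv.mp (wk1 h1) hyp0))

theorem nn_intro (a : F) : Deriv L Γ (L.imp a (L.neg (L.neg a))) :=
  ded (ded (Deriv.mp hyp0 (wk1 hyp0)))

theorem dne (a : F) : Deriv L Γ (L.imp (L.neg (L.neg a)) a) :=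
  Deriv.mp (Deriv.ax3 a (L.neg (L.neg a))) (nn_intro (L.neg a))

theorem efq (a : F) : Deriv L Γ (L.imp L.bot a) :=
  trans (Deriv.ax1 L.bot (L.neg a)) (dne a)

theorem notE (a b : F) : Deriv L Γ (L.imp (L.neg a) (L.imp a b)) :=
  ded (ded (Deriv.mp (wk1 (wk1 (efq b))) (Deriv.mp (wk1 hyp0) hyp0)))

theorem notE' (a b : F) : Deriv L Γ (L.imp a (L.imp (L.neg a) b)) :=
  ded (ded (Deriv.mp (wk1 (wk1 (efq b))) (Deriv.mp hyp0 (wk1 hyp0))))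

theorem byCases (h1 : Deriv L Γ (L.imp b c)) (h2 : Deriv L Γ (L.imp (L.neg b) c)) :
    Deriv L Γ c := by
  have contra1 : Deriv L Γ (L.imp (L.neg c) (L.neg b)) :=
    ded (ded (Deriv.mp (wk1 hyp0) (Deriv.mp (wk1 (wk1 h1)) hyp0)))
  have contra2 : Deriv L Γ (L.imp (L.neg c) (L.neg (L.neg b))) :=
    ded (ded (Deriv.mp (wk1 hyp0) (Deriv.mp (wk1 (wk1 h2)) hyp0)))
  have : Deriv L Γ (L.neg (L.neg c)) :=
    ded (Deriv.mp (Deriv.mp (wk1 contra2) hyp0) (Deriv.mp (wk1 contra1) hyp0))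
  exact Deriv.mp (dne c) this

theorem conj_intro (x y : F) : Deriv L Γ (L.imp x (L.imp y (L.conj x y))) :=
  ded (ded (ded (Deriv.mp (Deriv.mp hyp0 (wk1 (wk1 hyp0))) (wk1 hyp0))))

theorem conj_elim1 (x y : F) : Deriv L Γ (L.imp (L.conj x y) x) := by
  have : Deriv L Γ (L.imp (L.conj x y) (L.neg (L.neg x))) :=
    ded (ded (Deriv.mp (wk1 hyp0) (Deriv.mp (wk1 (wk1 (notE x (L.neg y)))) hyp0)))
  exact trans this (dne x)

theorem conj_elim2 (x y : F) : Deriv L Γ (L.imp (L.conj x y) y) := by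
  have : Deriv L Γ (L.imp (L.conj x y) (L.neg (L.neg y))) :=
    ded (ded (Deriv.mp (wk1 hyp0) (Deriv.mp (wk1 (wk1 (Deriv.ax1 (L.neg y) x))) hyp0)))
  exact trans this (dne y)

end DerivAux

open DerivAux

/-- The local reflection schema for a provability predicate `Bx`. -/
def RfnSet {F : Type} (L : Lang F) (Bx : F → F) : Set F := {χ | ∃ ψ, χ = L.imp (Bx ψ) ψ}

/-- Finite conjunction of a list of sentences. -/
def conjList {F : Type} (L : Lang F) : List F → F
  | [] => L.top
  | φ :: φs => L.conj φ (conjList L φs)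

/-- Case-elimination lemma. If
`T' ⊢ ⋀ᵢ(Box φᵢ → φᵢ) → [1]φ`, where `[1] = B1` satisfies necessitation and
distribution and provable `Σ₁`-completeness applies to the `Σ₁`-sentences
`Box φᵢ`, then `T' ⊢ [1]((⋀ᵢ ¬Box φᵢ) → φ)`. -/
theorem stmt12 {F : Type} (L : Lang F) (T' EA : Set F) (Box B1 : F → F)
    (φs : List F) (φ : F)
    (hEA : ∀ χ, Deriv L EA χ → Deriv L T' χ)
    (compl : ∀ ψ ∈ φs, Deriv L T' (L.imp (Box ψ) (B1 (Box ψ))))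
    (dist : ∀ χ ψ, Deriv L T' (L.imp (B1 (L.imp χ ψ)) (L.imp (B1 χ) (B1 ψ))))
    (nec : ∀ χ, Deriv L T' χ → Deriv L T' (B1 χ))
    (h : Deriv L T' (L.imp (conjList L (φs.map (fun ψ => L.imp (Box ψ) ψ))) (B1 φ))) :
    Deriv L T' (B1 (L.imp (conjList L (φs.map (fun ψ => L.neg (Box ψ)))) φ)) := by
  have mono : ∀ p q : F, Deriv L T' (L.imp p q) →
      Deriv L T' (L.imp (B1 p) (B1 q)) := fun p q hpq => (dist p q).mp (nec _ hpq)
  induction φs generalizing φ with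
  | nil =>
    simp only [List.map_nil, conjList] at h ⊢
    have hB : Deriv L T' (B1 φ) := h.mp (imp_id _)
    exact (mono φ (L.imp L.top φ) (Deriv.ax1 φ L.top)).mp hB
  | cons ψ rest ih =>
    simp only [List.map_cons, conjList] at h ⊢
    set C := conjList L (rest.map fun χ => L.imp (Box χ) χ) with hC
    set N := conjList L (rest.map fun χ => L.neg (Box χ)) with hN
    set b := Box ψ with hb
    set A := L.imp b ψ with hA
    -- h : T' ⊢ conj A C → B1 φ
    have h1 : Deriv L T' (L.imp A (L.imp C (B1 φ))) :=
      ded (ded (Deriv.mp (wk1 (wk1 h))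
        (Deriv.mp (Deriv.mp (wk1 (wk1 (conj_intro A C))) (wk1 hyp0)) hyp0)))
    have P1 : Deriv L T' (L.imp (L.neg b) (L.imp C (B1 φ))) :=
      DerivAux.trans (notE b ψ) h1
    have P2 : Deriv L T' (L.imp b (B1 b)) := compl ψ List.mem_cons_self
    have P3 : Deriv L T' (L.imp (B1 b) (B1 (L.imp (L.neg b) φ))) :=
      mono _ _ (notE' b φ)
    have P4 : Deriv L T' (L.imp (B1 φ) (B1 (L.imp (L.neg b) φ))) :=
      mono _ _ (Deriv.ax1 φ (L.neg b))
    have h' : Deriv L T' (L.imp C (B1 (L.imp (L.neg b) φ))) :=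
      ded (byCases (DerivAux.trans (wk1 P2) (wk1 P3))
        (ded (Deriv.mp (wk1 (wk1 P4))
          (Deriv.mp (Deriv.mp (wk1 (wk1 P1)) hyp0) (wk1 hyp0)))))
    have compl' : ∀ χ ∈ rest, Deriv L T' (L.imp (Box χ) (B1 (Box χ))) :=
      fun χ hχ => compl χ (List.mem_cons_of_mem _ hχ)
    have ihres := ih (L.imp (L.neg b) φ) compl' h'
    have tau2 : Deriv L T' (L.imp (L.imp N (L.imp (L.neg b) φ))
        (L.imp (L.conj (L.neg b) N) φ)) :=
      ded (ded (Deriv.mp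
        (Deriv.mp (wk1 hyp0)
          (Deriv.mp (conj_elim2 (L.neg b) N) hyp0))
        (Deriv.mp (conj_elim1 (L.neg b) N) hyp0)))
    exact (mono _ _ tau2).mp ihres
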